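/- Let Ω ⊆ ℝ^N be open, let φ = (φ^{(1)},…,φ^{(k)}) : Ω → ℝ^N be a C^1 vector field, and let ψ : Ω → ℝ be continuous with ψ(x) > 0 for all x ∈ Ω. Then for every C^1 function u : ℝ^N → ℝ whose support is compact and contained in Ω, and such that the functions ψ^2|∇_λ u|^2, u^2|φ|^2/ψ^2 and u^2·div_λ φ are Lebesgue integrable on Ω, one has ∫_Ω | (φ(x)/ψ(x)) u(x) − ψ(x) ∇_λ u(x) |^2 dx = ∫_Ω ψ(x)^2 |∇_λ u(x)|^2 dx + ∫_Ω u(x)^2 ( |φ(x)|^2/ψ(x)^2 + div_λ φ(x) ) dx. -/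

import Mathlib

open MeasureTheory Finset

noncomputable section

/-- `ℝ^N = ℝ^{N_1} × ⋯ × ℝ^{N_k}` with the Euclidean norm. -/
abbrev Eb {k : ℕ} (N : Fin k → ℕ) : Type :=
  PiLp 2 (fun i : Fin k => EuclideanSpace ℝ (Fin (N i)))

instance {k : ℕ} (N : Fin k → ℕ) : MeasurableSpace (Eb N) :=
  MeasurableSpace.comap (WithLp.equiv 2 _) MeasurableSpace.pi
instance {k : ℕ} (N : Fin k → ℕ) : BorelSpace (Eb N) := PiLp.borelSpace 2

/-- `λ_i(x) = ∏_j |x^{(j)}|^{α_{ij}}`. -/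
def lamF {k : ℕ} (N : Fin k → ℕ) (α : Fin k → Fin k → ℝ) (i : Fin k) (x : Eb N) : ℝ :=
  ∏ j : Fin k, ‖x j‖ ^ (α i j)

/-- the dilations `δ_r(x) = (r^{σ_1} x^{(1)}, …, r^{σ_k} x^{(k)})`. -/
def dilF {k : ℕ} (N : Fin k → ℕ) (σ : Fin k → ℝ) (r : ℝ) (x : Eb N) : Eb N :=
  (WithLp.equiv 2 _).symm (fun i => (r ^ σ i) • x i)

/-- the homogeneous norm `[[x]]_λ`. -/
def hnormF {k : ℕ} (N : Fin k → ℕ) (α : Fin k → Fin k → ℝ) (σ : Fin k → ℝ) (x : Eb N) : ℝ :=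
  (∑ j : Fin k, (∏ i ∈ Finset.univ.erase j, (lamF N α i x) ^ 2) * (σ j) ^ 2 * ‖x j‖ ^ 2)
    ^ (1 / (2 * (1 + ∑ i : Fin k, (σ i - 1))))

/-- the homogeneous distance from the origin `‖x‖_λ`. -/
def dnormF {k : ℕ} (N : Fin k → ℕ) (σ : Fin k → ℝ) (x : Eb N) : ℝ :=
  (∑ j : Fin k, ‖x j‖ ^ (2 * ∏ i ∈ Finset.univ.erase j, σ i))
    ^ (1 / (2 * ∏ i : Fin k, σ i))

/-- `∇_λ u = (λ_1 ∇_{x^{(1)}} u, …, λ_k ∇_{x^{(k)}} u)`. -/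
def lgradF {k : ℕ} (N : Fin k → ℕ) (α : Fin k → Fin k → ℝ) (u : Eb N → ℝ) (x : Eb N) : Eb N :=
  (WithLp.equiv 2 _).symm (fun i => lamF N α i x • (gradient u x) i)

/-- the standard basis vector of `ℝ^N` in block `i`, coordinate `j`. -/
def basisVecF {k : ℕ} (N : Fin k → ℕ) (i : Fin k) (j : Fin (N i)) : Eb N :=
  (WithLp.equiv 2 _).symm (Pi.single i (EuclideanSpace.single j 1))

/-- `div_λ h = ∑_i λ_i div_{x^{(i)}} h^{(i)}`. -/
def divlamF {k : ℕ} (N : Fin k → ℕ) (α : Fin k → Fin k → ℝ) (h : Eb N → Eb N) (x : Eb N) : ℝ :=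
  ∑ i : Fin k, lamF N α i x * ∑ j : Fin (N i), fderiv ℝ h x (basisVecF N i j) i j

/-- `Δ_λ u = ∑_i λ_i^2 Δ_{x^{(i)}} u`. -/
def lapLamF {k : ℕ} (N : Fin k → ℕ) (α : Fin k → Fin k → ℝ) (u : Eb N → ℝ) (x : Eb N) : ℝ :=
  ∑ i : Fin k, (lamF N α i x) ^ 2 * ∑ j : Fin (N i),
    fderiv ℝ (fun y => fderiv ℝ u y (basisVecF N i j)) x (basisVecF N i j)

/-- the homogeneous dimension `Q = σ_1 N_1 + ⋯ + σ_k N_k`. -/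
def QF {k : ℕ} (N : Fin k → ℕ) (σ : Fin k → ℝ) : ℝ :=
  ∑ i : Fin k, σ i * N i


section AuxLemmas

variable {k : ℕ} {N : Fin k → ℕ} {α : Fin k → Fin k → ℝ}

lemma lamF_cont (hα : ∀ i j, 0 ≤ α i j) (i : Fin k) : Continuous (lamF N α i) := by
  apply continuous_finset_prod
  intro l _
  exact (continuous_norm.comp (PiLp.proj (𝕜 := ℝ) 2 _ l).continuous).rpow_const
    (fun x => Or.inr (hα i l))

lemma lamF_lineDeriv (hα0 : ∀ i j : Fin k, i ≤ j → α i j = 0) (i : Fin k) (j : Fin (N i))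
    (x : Eb N) : HasLineDerivAt ℝ (lamF N α i) 0 x (basisVecF N i j) := by
  have hconst : ∀ t : ℝ, lamF N α i (x + t • basisVecF N i j) = lamF N α i x := by
    intro t
    unfold lamF
    refine Finset.prod_congr rfl (fun l _ => ?_)
    by_cases hl : l = i
    · subst hl
      rw [hα0 l l le_rfl, Real.rpow_zero, Real.rpow_zero]
    · congr 2
      show x l + t • (basisVecF N i j) l = x l
      have : (basisVecF N i j) l = 0 := by
        simp [basisVecF, Pi.single_eq_of_ne hl]
      rw [this, smul_zero, add_zero]
  show HasDerivAt (fun t : ℝ => lamF N α i (x + t • basisVecF N i j)) 0 0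
  have : (fun t : ℝ => lamF N α i (x + t • basisVecF N i j)) = fun _ => lamF N α i x :=
    funext hconst
  rw [this]
  exact hasDerivAt_const _ _

lemma grad_coord (u : Eb N → ℝ) (x : Eb N) (i : Fin k) (j : Fin (N i)) :
    (gradient u x) i j = fderiv ℝ u x (basisVecF N i j) := by
  have h1 : (inner ℝ (gradient u x) (basisVecF N i j) : ℝ) = fderiv ℝ u x (basisVecF N i j) := by
    rw [gradient]
    exact InnerProductSpace.toDual_symm_apply
  rw [← h1, PiLp.inner_apply]
  rw [Finset.sum_eq_single i]
  · have : (basisVecF N i j) i = EuclideanSpace.single j 1 := by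
      simp [basisVecF]
    rw [this, EuclideanSpace.inner_single_right]
    simp
  · intro l _ hl
    have : (basisVecF N i j) l = 0 := by simp [basisVecF, Pi.single_eq_of_ne hl]
    rw [this, inner_zero_right]
  · simp

lemma inner_lgrad (u : Eb N → ℝ) (w x : Eb N) :
    (inner ℝ w (lgradF N α u x) : ℝ) =
      ∑ i, lamF N α i x * ∑ j, w i j * fderiv ℝ u x (basisVecF N i j) := by
  rw [lgradF, PiLp.inner_apply]
  refine Finset.sum_congr rfl (fun i _ => ?_)
  have : ((WithLp.equiv 2 _).symm (fun i => lamF N α i x • (gradient u x) i) : Eb N) i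
      = lamF N α i x • (gradient u x) i := rfl
  rw [this, real_inner_smul_right, PiLp.inner_apply]
  congr 1
  refine Finset.sum_congr rfl (fun j _ => ?_)
  rw [← grad_coord u x i j]
  simp [RCLike.inner_apply, mul_comm]

lemma term_integrable (hα : ∀ i j, 0 ≤ α i j)
    (i : Fin k) (j : Fin (N i)) (g : Eb N → ℝ) (hg : ContDiff ℝ 1 g)
    (hgc : HasCompactSupport g) :
    Integrable (fun x => lamF N α i x * fderiv ℝ g x (basisVecF N i j)) volume := by
  set v := basisVecF N i j with hv
  have hDgc : Continuous fun x => fderiv ℝ g x v :=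
    (hg.continuous_fderiv one_ne_zero).clm_apply continuous_const
  have hDgsupp : HasCompactSupport fun x => fderiv ℝ g x v :=
    (hgc.fderiv (𝕜 := ℝ)).comp_left (g := fun L : (Eb N →L[ℝ] ℝ) => L v) rfl
  exact Continuous.integrable_of_hasCompactSupport ((lamF_cont hα i).mul hDgc)
    hDgsupp.mul_left

lemma key_zero (hα : ∀ i j, 0 ≤ α i j) (hα0 : ∀ i j : Fin k, i ≤ j → α i j = 0)
    (i : Fin k) (j : Fin (N i)) (g : Eb N → ℝ) (hg : ContDiff ℝ 1 g)
    (hgc : HasCompactSupport g) :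
    ∫ x, lamF N α i x * fderiv ℝ g x (basisVecF N i j) = 0 := by
  set v := basisVecF N i j with hv
  have hgL : ∀ x, HasLineDerivAt ℝ g (fderiv ℝ g x v) x v := fun x =>
    ((hg.differentiable one_ne_zero x).hasFDerivAt).hasLineDerivAt v
  have hfL : ∀ x, HasLineDerivAt ℝ (lamF N α i) ((fun _ => (0:ℝ)) x) x v := fun x =>
    lamF_lineDeriv hα0 i j x
  have I1 : Integrable (fun x => lamF N α i x * fderiv ℝ g x v) volume :=
    term_integrable hα i j g hg hgc
  have I2 : Integrable (fun x => lamF N α i x * g x) volume :=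
    Continuous.integrable_of_hasCompactSupport ((lamF_cont hα i).mul
      (hg.continuous)) (hgc.mul_left)
  have I0 : Integrable (fun x => (ContinuousLinearMap.mul ℝ ℝ) ((fun _ => (0:ℝ)) x) (g x))
      volume := by
    simpa using (integrable_zero _ ℝ (volume : Measure (Eb N)))
  have H := integral_bilinear_hasLineDerivAt_right_eq_neg_left_of_integrable
    (B := ContinuousLinearMap.mul ℝ ℝ) I0 (by simpa using I1) (by simpa using I2) (fun x _ => hfL x) (fun x _ => hgL x)
  simpa using H

end AuxLemmas

/-- the integration-by-parts identity
`∫_Ω |(φ/ψ)u - ψ∇_λ u|² = ∫_Ω ψ²|∇_λ u|² + ∫_Ω u²(|φ|²/ψ² + div_λ φ)`. -/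
theorem deltaLambda_integral_identity {k : ℕ} (hk : 0 < k)
    (N : Fin k → ℕ) (hN : ∀ i, 1 ≤ N i)
    (α : Fin k → Fin k → ℝ)
    (hα : ∀ i j, 0 ≤ α i j) (hα0 : ∀ i j : Fin k, i ≤ j → α i j = 0)
    (Ω : Set (Eb N)) (hΩ : IsOpen Ω)
    (φ : Eb N → Eb N) (hφ : ContDiffOn ℝ 1 φ Ω)
    (ψ : Eb N → ℝ) (hψc : ContinuousOn ψ Ω) (hψ : ∀ x ∈ Ω, 0 < ψ x)
    (u : Eb N → ℝ) (hu : ContDiff ℝ 1 u)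
    (hcs : HasCompactSupport u) (hsupp : tsupport u ⊆ Ω)
    (hint1 : IntegrableOn (fun x => ψ x ^ 2 * ‖lgradF N α u x‖ ^ 2) Ω)
    (hint2 : IntegrableOn (fun x => u x ^ 2 * (‖φ x‖ ^ 2 / ψ x ^ 2)) Ω)
    (hint3 : IntegrableOn (fun x => u x ^ 2 * divlamF N α φ x) Ω) :
    ∫ x in Ω, ‖(u x / ψ x) • φ x - ψ x • lgradF N α u x‖ ^ 2 =
      (∫ x in Ω, ψ x ^ 2 * ‖lgradF N α u x‖ ^ 2) +
        ∫ x in Ω, u x ^ 2 * (‖φ x‖ ^ 2 / ψ x ^ 2 + divlamF N α φ x) := by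
  classical
  -- cutoff construction
  obtain ⟨K1, hK1c, hK1i, hK1Ω⟩ := exists_compact_between hcs hΩ hsupp
  obtain ⟨K2, hK2c, hK2i, hK2Ω⟩ := exists_compact_between hK1c hΩ hK1Ω
  obtain ⟨χ, hχ0, hχ1, hχ01⟩ := exists_contMDiffMap_zero_one_of_isClosed (n := ⊤) (modelWithCornersSelf ℝ (Eb N))
    (isClosed_compl_iff.mpr isOpen_interior) hK1c.isClosed
    (by
      rw [Set.disjoint_left]
      intro a ha ha1
      exact ha (hK2i ha1))
  have hχs : ContDiff ℝ 1 (⇑χ) := (contMDiff_iff_contDiff.mp χ.contMDiff).of_le (by simp)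
  set Φ : Eb N → Eb N := fun x => χ x • φ x with hΦdef
  have hΦ : ContDiff ℝ 1 Φ := by
    rw [contDiff_iff_contDiffAt]
    intro x
    by_cases hx : x ∈ Ω
    · exact (hχs.contDiffAt).smul (hφ.contDiffAt (hΩ.mem_nhds hx))
    · have hnb : K2ᶜ ∈ nhds x :=
        (hK2c.isClosed.isOpen_compl).mem_nhds (fun hxK2 => hx (hK2Ω hxK2))
      have heq : Φ =ᶠ[nhds x] (fun _ => (0 : Eb N)) := by
        filter_upwards [hnb] with y hy
        have hy0 : χ y = 0 := hχ0 (fun hyi => hy (interior_subset hyi))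
        simp [hΦdef, hy0]
      exact (contDiffAt_const (c := (0 : Eb N))).congr_of_eventuallyEq heq
  have hΦeq : ∀ x ∈ tsupport u, Φ =ᶠ[nhds x] φ := by
    intro x hx
    have hmem : interior K1 ∈ nhds x := isOpen_interior.mem_nhds (hK1i hx)
    filter_upwards [hmem] with y hy
    have hy1 : χ y = 1 := hχ1 (interior_subset hy)
    simp [hΦdef, hy1]
  -- transfer lemmas
  have E2 : ∀ x, u x * (inner ℝ (φ x) (lgradF N α u x) : ℝ)
      = u x * (inner ℝ (Φ x) (lgradF N α u x) : ℝ) := by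
    intro x
    by_cases hx : x ∈ tsupport u
    · rw [(hΦeq x hx).eq_of_nhds]
    · simp [image_eq_zero_of_notMem_tsupport hx]
  have E1 : ∀ x, u x ^ 2 * divlamF N α φ x = u x ^ 2 * divlamF N α Φ x := by
    intro x
    by_cases hx : x ∈ tsupport u
    · have : fderiv ℝ Φ x = fderiv ℝ φ x := (hΦeq x hx).fderiv_eq
      unfold divlamF
      rw [this]
    · simp [image_eq_zero_of_notMem_tsupport hx]
  -- the functions
  set C' : Eb N → ℝ := fun x => 2 * u x * (inner ℝ (Φ x) (lgradF N α u x) : ℝ) with hC'def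
  set D' : Eb N → ℝ := fun x => u x ^ 2 * divlamF N α Φ x with hD'def
  have hucont : Continuous u := hu.continuous
  have huD : Differentiable ℝ u := hu.differentiable one_ne_zero
  have hΦD : Differentiable ℝ Φ := hΦ.differentiable one_ne_zero
  -- coordinate projections
  have hPij : ∀ (i : Fin k) (j : Fin (N i)), ∃ P : Eb N →L[ℝ] ℝ, ∀ y : Eb N, P y = y i j :=
    fun i j => ⟨(EuclideanSpace.proj j).comp (PiLp.proj (𝕜 := ℝ) 2 _ i), fun y => rfl⟩
  -- the basic C¹ coordinate functions g i j
  have hg : ∀ (i : Fin k) (j : Fin (N i)),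
      ContDiff ℝ 1 (fun y : Eb N => u y ^ 2 * Φ y i j) := by
    intro i j
    obtain ⟨P, hP⟩ := hPij i j
    have : ContDiff ℝ 1 (fun y : Eb N => u y ^ 2 * P (Φ y)) :=
      (hu.pow 2).mul (P.contDiff.comp hΦ)
    simpa only [hP] using this
  have hgc : ∀ (i : Fin k) (j : Fin (N i)),
      HasCompactSupport (fun y : Eb N => u y ^ 2 * Φ y i j) := by
    intro i j
    refine hcs.mono ?_
    intro x hx
    simp only [Function.mem_support] at hx ⊢
    intro h0
    apply hx
    rw [h0]
    ring
  -- derivative of the coordinate functions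
  have hD : ∀ (i : Fin k) (j : Fin (N i)) (x : Eb N),
      fderiv ℝ (fun y : Eb N => u y ^ 2 * Φ y i j) x (basisVecF N i j)
        = 2 * u x * fderiv ℝ u x (basisVecF N i j) * Φ x i j
          + u x ^ 2 * (fderiv ℝ Φ x (basisVecF N i j)) i j := by
    intro i j x
    obtain ⟨P, hP⟩ := hPij i j
    have hu' : HasFDerivAt u (fderiv ℝ u x) x := (huD x).hasFDerivAt
    have h1 : HasFDerivAt (fun y : Eb N => u y ^ 2) ((2 * u x) • fderiv ℝ u x) x := by
      have := hu'.mul hu'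
      have h2 : (fun y : Eb N => u y ^ 2) = fun y => u y * u y := by
        funext y; ring
      rw [h2]
      rw [two_mul, add_smul]
      exact this
    have h2 : HasFDerivAt (fun y : Eb N => Φ y i j) (P.comp (fderiv ℝ Φ x)) x := by
      have := P.hasFDerivAt.comp x (hΦD x).hasFDerivAt
      have heq : (fun y : Eb N => Φ y i j) = fun y => P (Φ y) := by
        funext y; rw [hP]
      rw [heq]
      exact this
    have h3 := h1.mul h2
    rw [show (fun y : Eb N => u y ^ 2 * Φ y i j) = (fun y => u y ^ 2) * (fun y => Φ y i j)
      from rfl, h3.fderiv]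
    simp only [ContinuousLinearMap.add_apply, ContinuousLinearMap.coe_smul',
      Pi.smul_apply, ContinuousLinearMap.coe_comp', Function.comp_apply, smul_eq_mul]
    rw [hP]
    ring
  -- pointwise identity
  have hpt : ∀ x, C' x + D' x = ∑ i, ∑ j, lamF N α i x *
      fderiv ℝ (fun y : Eb N => u y ^ 2 * Φ y i j) x (basisVecF N i j) := by
    intro x
    simp only [hC'def, hD'def, inner_lgrad u (Φ x) x, divlamF, hD]
    simp only [Finset.mul_sum]
    rw [← Finset.sum_add_distrib]
    refine Finset.sum_congr rfl (fun i _ => ?_)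
    rw [← Finset.sum_add_distrib]
    refine Finset.sum_congr rfl (fun j _ => ?_)
    ring
  -- the core vanishing integral
  have core : ∫ x, (C' x + D' x) = 0 := by
    rw [integral_congr_ae (Filter.Eventually.of_forall hpt)]
    rw [integral_finset_sum _ (fun i _ => integrable_finset_sum _
      (fun j _ => term_integrable hα i j _ (hg i j) (hgc i j)))]
    rw [Finset.sum_congr rfl (fun i _ => integral_finset_sum _
      (fun j _ => term_integrable hα i j _ (hg i j) (hgc i j)))]
    rw [Finset.sum_congr rfl (fun i _ => Finset.sum_congr rfl
      (fun j _ => key_zero hα hα0 i j _ (hg i j) (hgc i j)))]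
    simp
  -- integrability of C' and D'
  have hC'cont : Continuous C' := by
    have hrw : C' = fun x => 2 * u x * ∑ i, lamF N α i x *
        ∑ j, Φ x i j * fderiv ℝ u x (basisVecF N i j) := by
      funext x
      simp only [hC'def]
      rw [inner_lgrad u (Φ x) x]
    rw [hrw]
    refine (continuous_const.mul hucont).mul (continuous_finset_sum _ fun i _ =>
      (lamF_cont hα i).mul (continuous_finset_sum _ fun j _ => ?_))
    obtain ⟨P, hP⟩ := hPij i j
    have h1 : Continuous fun x : Eb N => Φ x i j := by
      have : Continuous fun x : Eb N => P (Φ x) := P.continuous.comp hΦ.continuous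
      simpa only [hP] using this
    exact h1.mul ((hu.continuous_fderiv one_ne_zero).clm_apply continuous_const)
  have hC'supp : HasCompactSupport C' := by
    refine hcs.mono ?_
    intro x hx
    simp only [Function.mem_support, hC'def] at hx ⊢
    intro h0
    exact hx (by rw [h0]; ring)
  have hC'int : Integrable C' volume := hC'cont.integrable_of_hasCompactSupport hC'supp
  have hD'cont : Continuous D' := by
    refine (hucont.pow 2).mul ?_
    unfold divlamF
    refine continuous_finset_sum _ fun i _ => (lamF_cont hα i).mul
      (continuous_finset_sum _ fun j _ => ?_)
    obtain ⟨P, hP⟩ := hPij i j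
    have : Continuous fun x : Eb N => P (fderiv ℝ Φ x (basisVecF N i j)) :=
      P.continuous.comp ((hΦ.continuous_fderiv one_ne_zero).clm_apply continuous_const)
    simpa only [hP] using this
  have hD'supp : HasCompactSupport D' := by
    refine hcs.mono ?_
    intro x hx
    simp only [Function.mem_support, hD'def] at hx ⊢
    intro h0
    exact hx (by rw [h0]; ring)
  have hD'int : Integrable D' volume := hD'cont.integrable_of_hasCompactSupport hD'supp
  -- off-support vanishing
  have hC'zero : ∀ x ∉ Ω, C' x = 0 := by
    intro x hx
    have hxu : u x = 0 := image_eq_zero_of_notMem_tsupport (fun h => hx (hsupp h))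
    simp [hC'def, hxu]
  have hD'zero : ∀ x ∉ Ω, D' x = 0 := by
    intro x hx
    have hxu : u x = 0 := image_eq_zero_of_notMem_tsupport (fun h => hx (hsupp h))
    simp [hD'def, hxu]
  -- relation between the set integrals of C' and D'
  have hCD : (∫ x in Ω, C' x) + ∫ x in Ω, D' x = 0 := by
    rw [setIntegral_eq_integral_of_forall_compl_eq_zero hC'zero,
      setIntegral_eq_integral_of_forall_compl_eq_zero hD'zero,
      ← integral_add hC'int hD'int]
    exact core
  -- pointwise expansion of the squared norm on Ω
  have hnorm : ∀ x ∈ Ω, ‖(u x / ψ x) • φ x - ψ x • lgradF N α u x‖ ^ 2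
      = ψ x ^ 2 * ‖lgradF N α u x‖ ^ 2 + u x ^ 2 * (‖φ x‖ ^ 2 / ψ x ^ 2) - C' x := by
    intro x hx
    have hψx : ψ x ≠ 0 := (hψ x hx).ne'
    have h1 : ‖(u x / ψ x) • φ x‖ ^ 2 = u x ^ 2 * (‖φ x‖ ^ 2 / ψ x ^ 2) := by
      rw [norm_smul, mul_pow, Real.norm_eq_abs, sq_abs]
      field_simp
      try ring
    have h2 : ‖ψ x • lgradF N α u x‖ ^ 2 = ψ x ^ 2 * ‖lgradF N α u x‖ ^ 2 := by
      rw [norm_smul, mul_pow, Real.norm_eq_abs, sq_abs]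
    have h3 : (inner ℝ ((u x / ψ x) • φ x) (ψ x • lgradF N α u x) : ℝ)
        = u x * (inner ℝ (Φ x) (lgradF N α u x) : ℝ) := by
      rw [real_inner_smul_left, real_inner_smul_right, ← E2 x]
      field_simp
      try ring
    rw [norm_sub_sq_real, h1, h2, h3, hC'def]
    ring
  -- now assemble everything
  have hsplitR : ∫ x in Ω, u x ^ 2 * (‖φ x‖ ^ 2 / ψ x ^ 2 + divlamF N α φ x)
      = (∫ x in Ω, u x ^ 2 * (‖φ x‖ ^ 2 / ψ x ^ 2)) + ∫ x in Ω, u x ^ 2 * divlamF N α φ x := by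
    simp only [mul_add]
    exact integral_add hint2 hint3
  have hDrw : ∫ x in Ω, u x ^ 2 * divlamF N α φ x = ∫ x in Ω, D' x := by
    simp only [hD'def, E1]
  have hLHS : ∫ x in Ω, ‖(u x / ψ x) • φ x - ψ x • lgradF N α u x‖ ^ 2
      = ∫ x in Ω, (ψ x ^ 2 * ‖lgradF N α u x‖ ^ 2 + u x ^ 2 * (‖φ x‖ ^ 2 / ψ x ^ 2) - C' x) :=
    setIntegral_congr_fun hΩ.measurableSet hnorm
  have hsplitL : ∫ x in Ω, (ψ x ^ 2 * ‖lgradF N α u x‖ ^ 2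
        + u x ^ 2 * (‖φ x‖ ^ 2 / ψ x ^ 2) - C' x)
      = ((∫ x in Ω, ψ x ^ 2 * ‖lgradF N α u x‖ ^ 2)
        + ∫ x in Ω, u x ^ 2 * (‖φ x‖ ^ 2 / ψ x ^ 2)) - ∫ x in Ω, C' x := by
    have hBA : IntegrableOn (fun x => ψ x ^ 2 * ‖lgradF N α u x‖ ^ 2
        + u x ^ 2 * (‖φ x‖ ^ 2 / ψ x ^ 2)) Ω := hint1.add hint2
    rw [integral_sub hBA hC'int.integrableOn, integral_add hint1 hint2]
  rw [hLHS, hsplitL, hsplitR, hDrw]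
  linarith [hCD]


end
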